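/- The Loday–Ronco map via the decreasing encoding: for every n ≥ 1 and every π ∈ S_n, ψ(π) = ε(f(π)), where ψ is the Loday–Ronco map (defined recursively by splitting at the maximal entry) and f is the decreasing encoding. -/

import Mathlib

/-- Indexed terms of the language `L^I`: generators `2^k` and partial compositions. -/
inductive Trm : Type
  | gen : ℕ → Trm
  | comp : Trm → ℕ → Trm → Trm
deriving DecidableEq

namespace Trm

/-- Arity `|A|`. -/
def arity : Trm → ℕ
  | gen _ => 2
  | comp A _ B => A.arity + B.arity - 1

/-- Set of indices occurring in a term. -/
def ind : Trm → Finset ℕ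
  | gen k => {k}
  | comp A _ B => A.ind ∪ B.ind

/-- Root index. -/
def root : Trm → ℕ
  | gen k => k
  | comp A _ _ => A.root

/-- Number of occurrences of the generator. -/
def countGen : Trm → ℕ
  | gen _ => 1
  | comp A _ B => A.countGen + B.countGen

end Trm

/-- The congruence `=_I` generated by (assoc1) and (assoc2). -/
inductive IEq : Trm → Trm → Prop
  | refl (A : Trm) : IEq A A
  | symm {A B} : IEq A B → IEq B A
  | trans {A B C} : IEq A B → IEq B C → IEq A C
  | congr {A A' B B'} (n : ℕ) : IEq A A' → IEq B B' →
      IEq (Trm.comp A n B) (Trm.comp A' n B')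
  | assoc1 (A B C : Trm) (n m : ℕ) : n ≤ m → m < n + B.arity →
      IEq (Trm.comp (Trm.comp A n B) m C) (Trm.comp A n (Trm.comp B (m - n + 1) C))
  | assoc2 (A B C : Trm) (n m : ℕ) : n + B.arity ≤ m →
      IEq (Trm.comp (Trm.comp A n B) m C) (Trm.comp (Trm.comp A (m - B.arity + 1) C) n B)

/-- Planar binary trees. -/
inductive BT : Type
  | leaf : BT
  | node : BT → BT → BT
deriving DecidableEq

namespace BT

/-- Number of leaves. -/
def leaves : BT → ℕ
  | leaf => 1
  | node l r => l.leaves + r.leaves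

/-- Graft `S` at the `i`-th leaf (1-indexed) of a tree. -/
def graft : BT → ℕ → BT → BT
  | leaf, _, S => S
  | node l r, i, S =>
    if i ≤ l.leaves then node (l.graft i S) r else node l (r.graft (i - l.leaves) S)

end BT

/-- Evaluation `ε` of indexed terms to planar binary trees. -/
def Trm.eval : Trm → BT
  | Trm.gen _ => BT.node BT.leaf BT.leaf
  | Trm.comp A i B => A.eval.graft i B.eval

/-- `l`-factors. -/
inductive LFactor : Trm → Prop
  | gen (k : ℕ) : LFactor (Trm.gen k)
  | step {A : Trm} (j : ℕ) : LFactor A → j ∉ A.ind →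
      LFactor (Trm.comp A ((A.ind.filter (· < j)).card + 1) (Trm.gen j))

/-- Auxiliary for the head-insertion encoding: `done` is the list of already
inserted letters. -/
def hAux : Trm → List ℕ → List ℕ → Trm
  | A, _, [] => A
  | A, done, y :: rest =>
      hAux (Trm.comp A ((done.filter (· < y)).length + 1) (Trm.gen y)) (done ++ [y]) rest

/-- Head-insertion encoding `h` (junk value on the empty word). -/
def hWord : List ℕ → Trm
  | [] => Trm.gen 0
  | x :: rest => hAux (Trm.gen x) [x] rest

/-- `u_a(x)`: number of letters to the left of `x` in `a` that are greater than `x`. -/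
def uCount (a : List ℕ) (x : ℕ) : ℕ := ((a.takeWhile (· ≠ x)).filter (x < ·)).length

/-- Decreasing rearrangement of a word. -/
def sortDesc (a : List ℕ) : List ℕ := (a.mergeSort (· ≤ ·)).reverse

/-- Decreasing encoding `f` (junk value on the empty word). -/
def fWord (a : List ℕ) : Trm :=
  match sortDesc a with
  | [] => Trm.gen 0
  | k :: rest => rest.foldl (fun A x => Trm.comp A (uCount a x + 1) (Trm.gen x)) (Trm.gen k)

/-- Standardization of a word of distinct integers. -/
def std (a : List ℕ) : List ℕ := a.map (fun x => (a.filter (· ≤ x)).length)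

/-- Tonks' vertex map, splitting form `φ`. -/
def tonksPhi (a : List ℕ) : BT :=
  match ha : a.getLast? with
  | none => BT.leaf
  | some x =>
      BT.node (tonksPhi (std (a.filter (· < x)))) (tonksPhi (std (a.filter (x < ·))))
termination_by a.length
decreasing_by
  · have hx : x ∈ a := List.mem_of_mem_getLast? (Option.mem_def.mpr ha)
    have : (a.filter (· < x)).length < a.length := by
      apply List.length_filter_lt_length_iff_exists.2
      exact ⟨x, hx, by simp⟩
    simp only [std, List.length_map, List.length_unattach]
    exact lt_of_lt_of_eq (List.length_filter_lt_length_iff_exists.2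
      ⟨⟨x, hx⟩, List.mem_attach _ _, by simp⟩) List.length_attach
  · have hx : x ∈ a := List.mem_of_mem_getLast? (Option.mem_def.mpr ha)
    have : (a.filter (x < ·)).length < a.length := by
      apply List.length_filter_lt_length_iff_exists.2
      exact ⟨x, hx, by simp⟩
    simp only [std, List.length_map, List.length_unattach]
    exact lt_of_lt_of_eq (List.length_filter_lt_length_iff_exists.2
      ⟨⟨x, hx⟩, List.mem_attach _ _, by simp⟩) List.length_attach

/-- Tonks' vertex map, head-grafting form `φ̂`. -/
def phiHat : List ℕ → BT
  | [] => BT.leaf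
  | x :: rest => (phiHat (std rest)).graft x (BT.node BT.leaf BT.leaf)
termination_by a => a.length
decreasing_by
  simp [std]

/-- The Loday–Ronco map `ψ`. -/
def lodayPsi (a : List ℕ) : BT :=
  match hm : a.maximum with
  | none => BT.leaf
  | some m =>
      let i := a.idxOf m
      BT.node (lodayPsi (std (a.take i))) (lodayPsi (std (a.drop (i + 1))))
termination_by a.length
decreasing_by
  · have hmem : m ∈ a := List.maximum_mem hm
    have hi : a.idxOf m < a.length := List.idxOf_lt_length_of_mem hmem
    simp only [std, List.length_map, List.length_take]
    omega
  · have : a ≠ [] := by rintro rfl; simp [List.maximum] at hm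
    have : 0 < a.length := List.length_pos_iff.2 this
    simp only [std, List.length_map, List.length_drop]
    omega

/-- Inverse of a permutation word on `{1,…,n}`. -/
def invWord (π : List ℕ) : List ℕ :=
  (List.range π.length).map (fun j => π.idxOf (j + 1) + 1)

/-- One Tamari (right rotation) step, at any subtree. -/
inductive TamariStep : BT → BT → Prop
  | rot (X Y Z : BT) : TamariStep (BT.node (BT.node X Y) Z) (BT.node X (BT.node Y Z))
  | left {l l'} (r : BT) : TamariStep l l' → TamariStep (BT.node l r) (BT.node l' r)
  | right (l : BT) {r r'} : TamariStep r r' → TamariStep (BT.node l r) (BT.node l r')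

/-- The Tamari order. -/
def TamariLE : BT → BT → Prop := Relation.ReflTransGen TamariStep

/-- The strict Tamari order. -/
def TamariLT : BT → BT → Prop := Relation.TransGen TamariStep

/-- One cover of the right weak Bruhat order on words. -/
inductive BruhatStep : List ℕ → List ℕ → Prop
  | swap (α : List ℕ) {u v : ℕ} (β : List ℕ) : u < v →
      BruhatStep (α ++ u :: v :: β) (α ++ v :: u :: β)

/-- The right weak Bruhat order on words. -/
def BruhatLE : List ℕ → List ℕ → Prop := Relation.ReflTransGen BruhatStep

/-- Head-insertion index `k(a; σ)`. -/
def kIdx (a : ℕ) (σ : List ℕ) : ℕ := 1 + (σ.filter (· < a)).length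


namespace LRAux

open List

/-! ### Unfolding lemmas -/

theorem lodayPsi_eq_of_max {a : List ℕ} {M : ℕ} (hm : a.maximum = some M) :
    lodayPsi a = BT.node (lodayPsi (std (a.take (a.idxOf M))))
      (lodayPsi (std (a.drop (a.idxOf M + 1)))) := by
  rw [lodayPsi]
  split
  · rename_i h; rw [h] at hm; cases hm
  · rename_i m h; rw [h] at hm; cases hm; rfl

theorem lodayPsi_nil : lodayPsi [] = BT.leaf := by rw [lodayPsi]; rfl

theorem std_nil : std [] = [] := rfl

theorem lodayPsi_singleton (x : ℕ) : lodayPsi [x] = BT.node BT.leaf BT.leaf := by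
  have hm : ([x]).maximum = some x :=
    List.maximum_eq_coe_iff.mpr ⟨by simp, by simp⟩
  rw [lodayPsi_eq_of_max hm]
  simp [std_nil, lodayPsi_nil]

theorem fWord_eq (a : List ℕ) {k : ℕ} {rest : List ℕ} (h : sortDesc a = k :: rest) :
    fWord a = rest.foldl (fun A x => Trm.comp A (uCount a x + 1) (Trm.gen x)) (Trm.gen k) := by
  unfold fWord
  split
  · rename_i h'; rw [h'] at h; cases h
  · rename_i k' rest' h'; rw [h'] at h; cases h; rfl

/-! ### indexOf / maximum helpers -/

theorem indexOf_append_cons {M : ℕ} (α β : List ℕ) (h : M ∉ α) :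
    (α ++ M :: β).idxOf M = α.length := by
  induction α with
  | nil => simp
  | cons x t ih =>
      simp only [List.mem_cons, not_or] at h
      have hb : (x == M) = false := beq_false_of_ne (fun hh => h.1 hh.symm)
      simp [List.idxOf_cons, hb, ih h.2]

theorem maximum_split {α β : List ℕ} {M : ℕ} (hα : ∀ x ∈ α, x < M) (hβ : ∀ x ∈ β, x < M) :
    (α ++ M :: β).maximum = some M := by
  refine List.maximum_eq_coe_iff.mpr ⟨by simp, ?_⟩
  intro x hx
  rcases List.mem_append.1 hx with h | h
  · exact (hα x h).le
  · rcases List.mem_cons.1 h with rfl | h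
    · exact le_refl _
    · exact (hβ x h).le

theorem lodayPsi_split_std {α β : List ℕ} {M : ℕ} (hα : ∀ x ∈ α, x < M) (hβ : ∀ x ∈ β, x < M) :
    lodayPsi (α ++ M :: β) = BT.node (lodayPsi (std α)) (lodayPsi (std β)) := by
  have hM : M ∉ α := fun h => lt_irrefl M (hα M h)
  have hdrop : (α ++ M :: β).drop (α.length + 1) = β := by
    rw [show α.length + 1 = (α ++ [M]).length by simp, List.append_cons α M β,
      List.drop_left]
  rw [lodayPsi_eq_of_max (maximum_split hα hβ), indexOf_append_cons α β hM,
    List.take_left, hdrop]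

/-! ### std invariance -/

theorem countP_le_split {x y : ℕ} (h : x ≤ y) (l : List ℕ) :
    l.countP (fun z => z ≤ y) =
      l.countP (fun z => z ≤ x) + l.countP (fun z => decide (x < z) && decide (z ≤ y)) := by
  induction l with
  | nil => simp
  | cons a t ih =>
      simp only [List.countP_cons, ih]
      by_cases h1 : a ≤ x <;> by_cases h2 : a ≤ y <;> by_cases h3 : x < a <;>
        first
          | omega
          | (simp [h1, h2, h3]; omega)
          | simp [h1, h2, h3]

theorem std_map_strictMono {l : List ℕ} {x y : ℕ} (hy : y ∈ l) (hxy : x < y) :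
    l.countP (fun z => z ≤ x) < l.countP (fun z => z ≤ y) := by
  rw [countP_le_split hxy.le l]
  have : 0 < l.countP (fun z => decide (x < z) && decide (z ≤ y)) := by
    rw [List.countP_pos_iff]
    exact ⟨y, hy, by simp [hxy]⟩
  omega

theorem std_eq_map (l : List ℕ) :
    std l = l.map (fun x => l.countP (fun z => z ≤ x)) := by
  simp [std, List.countP_eq_length_filter]

theorem std_map_eq {l : List ℕ} {g : ℕ → ℕ}
    (hg : ∀ x ∈ l, ∀ y ∈ l, x < y → g x < g y) :
    std (l.map g) = std l := by
  have key : ∀ x ∈ l, ∀ z ∈ l, (g z ≤ g x) ↔ (z ≤ x) := by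
    intro x hx z hz
    constructor
    · intro h
      by_contra hc
      exact absurd (hg x hx z hz (by omega)) (by omega)
    · intro h
      rcases eq_or_lt_of_le h with rfl | h
      · exact le_refl _
      · exact (hg z hz x hx h).le
  rw [std_eq_map, std_eq_map, List.map_map]
  apply List.map_congr_left
  intro x hx
  simp only [Function.comp]
  rw [List.countP_map]
  apply List.countP_congr
  intro z hz
  simpa using key x hx z hz

/-! ### max split decomposition -/

theorem exists_max_split {a : List ℕ} (hne : a ≠ []) (hnd : a.Nodup) :
    ∃ α M β, a = α ++ M :: β ∧ (∀ x ∈ α, x < M) ∧ (∀ x ∈ β, x < M) := by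
  obtain ⟨M, hM⟩ : ∃ M, a.maximum = some M := by
    cases h : a.maximum with
    | bot => exact absurd (List.maximum_eq_bot.1 h) hne
    | coe M => exact ⟨M, rfl⟩
  have hmem : M ∈ a := List.maximum_mem hM
  have hle : ∀ x ∈ a, x ≤ M := (List.maximum_eq_coe_iff.1 hM).2
  obtain ⟨l₁, l₂, hnm, heq, -⟩ := List.exists_erase_eq hmem
  subst heq
  have hnd' := hnd
  rw [List.nodup_append] at hnd'
  refine ⟨l₁, M, l₂, rfl, ?_, ?_⟩
  · intro x hx
    have hne' : x ≠ M := fun h => hnm (h ▸ hx)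
    exact lt_of_le_of_ne (hle x (by simp [hx])) hne'
  · intro x hx
    have hne' : x ≠ M := by
      rintro rfl
      exact (List.nodup_cons.1 hnd'.2.1).1 hx
    exact lt_of_le_of_ne (hle x (by simp [hx])) hne'

theorem lodayPsi_map_eq {l : List ℕ} (hnd : l.Nodup) {g : ℕ → ℕ}
    (hg : ∀ x ∈ l, ∀ y ∈ l, x < y → g x < g y) :
    lodayPsi (l.map g) = lodayPsi l := by
  rcases eq_or_ne l [] with rfl | hne
  · simp
  obtain ⟨α, M, β, rfl, hα, hβ⟩ := exists_max_split hne hnd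
  have hmemα : ∀ x ∈ α, x ∈ α ++ M :: β := fun x hx => by simp [hx]
  have hmemβ : ∀ x ∈ β, x ∈ α ++ M :: β := fun x hx => by simp [hx]
  have hM : M ∈ α ++ M :: β := by simp
  have hmap : (α ++ M :: β).map g = α.map g ++ g M :: β.map g := by simp
  rw [hmap, lodayPsi_split_std (M := g M)
      (by intro x hx; obtain ⟨y, hy, rfl⟩ := List.mem_map.1 hx
          exact hg y (hmemα y hy) M hM (hα y hy))
      (by intro x hx; obtain ⟨y, hy, rfl⟩ := List.mem_map.1 hx
          exact hg y (hmemβ y hy) M hM (hβ y hy)),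
    lodayPsi_split_std hα hβ,
    std_map_eq (fun x hx y hy h => hg x (hmemα x hx) y (hmemα y hy) h),
    std_map_eq (fun x hx y hy h => hg x (hmemβ x hx) y (hmemβ y hy) h)]

theorem lodayPsi_std {l : List ℕ} (hnd : l.Nodup) : lodayPsi (std l) = lodayPsi l := by
  rw [std_eq_map]
  exact lodayPsi_map_eq hnd (fun x _ y hy h => std_map_strictMono hy h)

theorem lodayPsi_split {α β : List ℕ} {M : ℕ} (hnd : (α ++ M :: β).Nodup)
    (hα : ∀ x ∈ α, x < M) (hβ : ∀ x ∈ β, x < M) :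
    lodayPsi (α ++ M :: β) = BT.node (lodayPsi α) (lodayPsi β) := by
  have h1 : α.Nodup := (List.nodup_append.1 hnd).1
  have h2 : β.Nodup := (List.nodup_cons.1 (List.nodup_append.1 hnd).2.1).2
  rw [lodayPsi_split_std hα hβ, lodayPsi_std h1, lodayPsi_std h2]

theorem psi_leaves (a : List ℕ) (hnd : a.Nodup) : (lodayPsi a).leaves = a.length + 1 := by
  rcases eq_or_ne a [] with rfl | hne
  · simp [lodayPsi_nil, BT.leaves]
  obtain ⟨α, M, β, heq, hα, hβ⟩ := exists_max_split hne hnd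
  have hnd' := hnd
  rw [heq] at hnd'
  have h1 : α.Nodup := (List.nodup_append.1 hnd').1
  have h2 : β.Nodup := (List.nodup_cons.1 (List.nodup_append.1 hnd').2.1).2
  rw [heq, lodayPsi_split hnd' hα hβ]
  have ih1 := psi_leaves α h1
  have ih2 := psi_leaves β h2
  simp only [BT.leaves, ih1, ih2, List.length_append, List.length_cons]
  omega
termination_by a.length
decreasing_by
  all_goals (simp [heq]; try omega)


/-! ### takeWhile / uCount lemmas -/

theorem takeWhile_ne_append_of_mem {x : ℕ} {l : List ℕ} (r : List ℕ) (h : x ∈ l) :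
    (l ++ r).takeWhile (· ≠ x) = l.takeWhile (· ≠ x) := by
  induction l with
  | nil => cases h
  | cons a t ih =>
      by_cases ha : a = x
      · subst ha; simp [List.takeWhile_cons]
      · rcases List.mem_cons.1 h with rfl | h
        · exact absurd rfl ha
        · simp [List.takeWhile_cons, ha]
          simpa using ih h

theorem takeWhile_ne_append_of_not_mem {x : ℕ} {l : List ℕ} (r : List ℕ) (h : x ∉ l) :
    (l ++ r).takeWhile (· ≠ x) = l ++ r.takeWhile (· ≠ x) := by
  induction l with
  | nil => simp
  | cons a t ih =>
      simp only [List.mem_cons, not_or] at h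
      have ha : ¬ a = x := fun hh => h.1 hh.symm
      simp [List.takeWhile_cons, ha]
      simpa using ih h.2

theorem uCount_append_left {x : ℕ} {l : List ℕ} (r : List ℕ) (h : x ∈ l) :
    uCount (l ++ r) x = uCount l x := by
  unfold uCount
  rw [takeWhile_ne_append_of_mem r h]

theorem takeWhile_ne_length_lt {x : ℕ} {l : List ℕ} (h : x ∈ l) :
    (l.takeWhile (· ≠ x)).length < l.length := by
  induction l with
  | nil => cases h
  | cons a t ih =>
      by_cases ha : a = x
      · subst ha; simp [List.takeWhile_cons]
      · rcases List.mem_cons.1 h with rfl | h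
        · exact absurd rfl ha
        · simp only [List.takeWhile_cons, ha]
          simpa [ha] using Nat.succ_lt_succ (ih h)

theorem uCount_lt_length {x : ℕ} {l : List ℕ} (h : x ∈ l) :
    uCount l x < l.length := by
  unfold uCount
  calc ((l.takeWhile (· ≠ x)).filter (x < ·)).length
      ≤ (l.takeWhile (· ≠ x)).length := List.length_filter_le _ _
    _ < l.length := takeWhile_ne_length_lt h

/-- `uCount` of the minimum in a split list. -/
theorem uCount_min_right {α β : List ℕ} {M m : ℕ} (hm : m ∉ α) (hM : M ≠ m)
    (hα : ∀ x ∈ α, m < x) (hMm : m < M) :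
    uCount (α ++ M :: β) m = α.length + 1 + uCount β m := by
  unfold uCount
  rw [takeWhile_ne_append_of_not_mem _ hm]
  rw [show (M :: β).takeWhile (· ≠ m) = M :: β.takeWhile (· ≠ m) by
    simp [List.takeWhile_cons, hM]]
  rw [List.filter_append, List.filter_cons, List.length_append]
  have hfα : α.filter (m < ·) = α := List.filter_eq_self.2 (fun x hx => by
    simpa using hα x hx)
  rw [hfα]
  simp [hMm]
  omega

/-- Removing the minimum does not change `uCount` at other letters. -/
theorem uCount_erase_min {a : List ℕ} {m x : ℕ} (hnd : a.Nodup) (hm : m ∈ a)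
    (hmin : ∀ y ∈ a, y ≠ m → m < y) (hx : x ∈ a) (hxm : x ≠ m) :
    uCount (a.erase m) x = uCount a x := by
  obtain ⟨l₁, l₂, hnm, heq, herase⟩ := List.exists_erase_eq hm
  rw [herase, heq]
  by_cases h1 : x ∈ l₁
  · rw [uCount_append_left l₂ h1, uCount_append_left (m :: l₂) h1]
  · have h2 : x ∈ l₂ := by
      have : x ∈ l₁ ++ m :: l₂ := heq ▸ hx
      rcases List.mem_append.1 this with h | h
      · exact absurd h h1
      · rcases List.mem_cons.1 h with rfl | h
        · exact absurd rfl hxm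
        · exact h
    have hmx : m < x := hmin x hx hxm
    unfold uCount
    rw [takeWhile_ne_append_of_not_mem _ h1, takeWhile_ne_append_of_not_mem _ h1]
    rw [show (m :: l₂).takeWhile (· ≠ x) = m :: l₂.takeWhile (· ≠ x) by
      simp [List.takeWhile_cons]; omega]
    rw [List.filter_append, List.filter_append, List.filter_cons]
    have : ¬ (x < m) := by omega
    simp [this]

/-! ### sortDesc lemmas -/

theorem sortDesc_perm (a : List ℕ) : sortDesc a ~ a :=
  (List.reverse_perm _).trans (List.mergeSort_perm a _)

theorem sortDesc_sorted (a : List ℕ) : (sortDesc a).Pairwise (· ≥ ·) := by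
  have h := List.pairwise_mergeSort (le := fun x y : ℕ => x ≤ y)
    (fun a b c h1 h2 => by simp at *; omega)
    (fun a b => by simp; omega) a
  unfold sortDesc
  rw [List.pairwise_reverse]
  exact h.imp (fun {x y} h => by simpa using h)

theorem sortDesc_eq_of_sorted {a b : List ℕ} (hp : b ~ a) (hs : b.Pairwise (· ≥ ·)) :
    sortDesc a = b := by
  haveI : IsAntisymm ℕ (· ≥ ·) := ⟨fun a b h1 h2 => le_antisymm h2 h1⟩
  exact List.Perm.eq_of_pairwise (fun a b _ _ h1 h2 => le_antisymm h2 h1) (sortDesc_sorted a) hs ((sortDesc_perm a).trans hp.symm)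

theorem sortDesc_singleton (x : ℕ) : sortDesc [x] = [x] :=
  sortDesc_eq_of_sorted (List.Perm.refl _) (by simp)

theorem sortDesc_min {a : List ℕ} {m : ℕ} (hm : m ∈ a)
    (hmin : ∀ x ∈ a, x ≠ m → m < x) :
    sortDesc a = sortDesc (a.erase m) ++ [m] := by
  apply sortDesc_eq_of_sorted
  · calc sortDesc (a.erase m) ++ [m] ~ a.erase m ++ [m] :=
          (sortDesc_perm _).append_right _
      _ ~ m :: a.erase m := (List.perm_append_singleton _ _)
      _ ~ a := (List.perm_cons_erase hm).symm
  · rw [List.pairwise_append]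
    refine ⟨sortDesc_sorted _, by simp, ?_⟩
    intro x hx y hy
    rw [List.mem_singleton] at hy
    rw [hy]
    have hxa : x ∈ a := by
      have := (sortDesc_perm (a.erase m)).mem_iff.1 hx
      exact List.mem_of_mem_erase this
    by_cases hxm : x = m
    · exact le_of_eq hxm.symm
    · exact (hmin x hxa hxm).le



/-! ### fWord recursion (removal of the minimum) -/

theorem foldl_congr_mem {f g : Trm → ℕ → Trm} :
    ∀ (l : List ℕ) (i : Trm), (∀ x ∈ l, ∀ A, f A x = g A x) → l.foldl f i = l.foldl g i := by
  intro l
  induction l with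
  | nil => intro i _; rfl
  | cons a t ih =>
      intro i h
      simp only [List.foldl_cons]
      rw [h a (by simp) i]
      exact ih _ (fun x hx A => h x (by simp [hx]) A)

theorem fWord_erase_min {a : List ℕ} {m : ℕ} (hnd : a.Nodup) (hm : m ∈ a)
    (hmin : ∀ x ∈ a, x ≠ m → m < x) (hlen : 2 ≤ a.length) :
    fWord a = Trm.comp (fWord (a.erase m)) (uCount a m + 1) (Trm.gen m) := by
  have hsd := sortDesc_min hm hmin
  have hlen' : 1 ≤ (a.erase m).length := by
    rw [List.length_erase_of_mem hm]; omega
  obtain ⟨k, rest, hk⟩ : ∃ k rest, sortDesc (a.erase m) = k :: rest := by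
    cases h : sortDesc (a.erase m) with
    | nil =>
        have := (sortDesc_perm (a.erase m)).length_eq
        rw [h] at this
        simp at this
        omega
    | cons k rest => exact ⟨k, rest, rfl⟩
  rw [hk] at hsd
  rw [fWord_eq a (by simpa using hsd), fWord_eq (a.erase m) hk]
  rw [List.foldl_concat]
  congr 1
  apply foldl_congr_mem
  intro x hx A
  have hxa : x ∈ a.erase m := (sortDesc_perm (a.erase m)).mem_iff.1 (by simp [hk, hx])
  have hxm : x ≠ m := ((List.Nodup.mem_erase_iff hnd).1 hxa).1
  rw [uCount_erase_min hnd hm hmin (List.mem_of_mem_erase hxa) hxm]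

/-! ### lodayPsi recursion (removal of the minimum) -/

theorem psi_erase_min (a : List ℕ) (m : ℕ) (hnd : a.Nodup) (hm : m ∈ a)
    (hmin : ∀ x ∈ a, x ≠ m → m < x) (hlen : 2 ≤ a.length) :
    lodayPsi a = (lodayPsi (a.erase m)).graft (uCount a m + 1) (BT.node BT.leaf BT.leaf) := by
  have hne : a ≠ [] := by intro h; rw [h] at hlen; simp at hlen
  obtain ⟨α, M, β, heq, hα, hβ⟩ := exists_max_split hne hnd
  have hnd' := hnd; rw [heq] at hnd'
  have hndα : α.Nodup := (List.nodup_append.1 hnd').1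
  have hndβ : β.Nodup := (List.nodup_cons.1 (List.nodup_append.1 hnd').2.1).2
  have hMβ : M ∉ β := (List.nodup_cons.1 (List.nodup_append.1 hnd').2.1).1
  have hdisj : ∀ x ∈ α, x ∉ M :: β := by
    intro x hx
    exact fun hc => ((List.nodup_append.1 hnd').2.2) x hx x hc rfl
  -- m ≠ M
  obtain ⟨w, hw⟩ : ∃ w, w ∈ a.erase m := by
    apply List.exists_mem_of_ne_nil
    intro h
    have := List.length_erase_of_mem hm
    rw [h] at this; simp at this; omega
  have hwm : w ≠ m := ((List.Nodup.mem_erase_iff hnd).1 hw).1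
  have hwa : w ∈ a := List.mem_of_mem_erase hw
  have hmw : m < w := hmin w hwa hwm
  have hwM : w ≤ M := by
    have h2 : w ∈ α ++ M :: β := heq ▸ hwa
    rcases List.mem_append.1 h2 with h | h
    · exact (hα w h).le
    · rcases List.mem_cons.1 h with rfl | h
      · exact le_refl _
      · exact (hβ w h).le
  have hmM : m ≠ M := by omega
  have hmαβ : m ∈ α ∨ m ∈ β := by
    have : m ∈ α ++ M :: β := heq ▸ hm
    rcases List.mem_append.1 this with h | h
    · exact Or.inl h
    · rcases List.mem_cons.1 h with rfl | h
      · exact absurd rfl hmM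
      · exact Or.inr h
  rcases hmαβ with hmα | hmβ
  · -- m in the left part
    have herase : a.erase m = α.erase m ++ M :: β := by
      rw [heq, List.erase_append_left _ hmα]
    have hndαe : (α.erase m).Nodup := hndα.erase m
    have hu : uCount a m = uCount α m := by
      rw [heq]; exact uCount_append_left _ hmα
    have hlift : ∀ x ∈ α.erase m, x ∈ α := fun x hx => List.mem_of_mem_erase hx
    rw [heq] at herase hu
    rw [heq, lodayPsi_split hnd' hα hβ, herase,
      lodayPsi_split (herase ▸ ((heq ▸ hnd : (α ++ M :: β).Nodup).erase m)) (fun x hx => hα x (hlift x hx)) hβ, hu]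
    have hleaves : (lodayPsi (α.erase m)).leaves = α.length := by
      rw [psi_leaves _ hndαe, List.length_erase_of_mem hmα]
      have : 1 ≤ α.length := List.length_pos_of_mem hmα
      omega
    have hpos : uCount α m + 1 ≤ (lodayPsi (α.erase m)).leaves := by
      rw [hleaves]
      have := uCount_lt_length hmα
      omega
    rw [BT.graft, if_pos hpos]
    congr 1
    rcases Nat.lt_or_ge α.length 2 with hsmall | hbig
    · -- α = [m]
      have hα1 : α = [m] := by
        have h1 : α.length = 1 := by
          have : 1 ≤ α.length := List.length_pos_of_mem hmα
          omega
        match α, h1 with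
        | [x], _ =>
            rcases List.mem_singleton.1 hmα with rfl
            rfl
      rw [hα1]
      have : uCount [m] m = 0 := by
        unfold uCount
        simp [List.takeWhile_cons]
      rw [this, lodayPsi_singleton]
      simp [List.erase_cons, lodayPsi_nil, BT.graft]
    · -- use induction hypothesis on α
      exact psi_erase_min α m hndα hmα
        (fun x hx hxm => hmin x (heq ▸ (List.mem_append.2 (Or.inl hx))) hxm) hbig
  · -- m in the right part
    have hmnα : m ∉ α := fun hc => (hdisj m hc) (by simp [hmβ])
    have herase : a.erase m = α ++ M :: β.erase m := by
      rw [heq, List.erase_append_right _ hmnα, List.erase_cons_tail]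
      simp [Ne.symm hmM]
    have hndβe : (β.erase m).Nodup := hndβ.erase m
    have hu : uCount a m = α.length + 1 + uCount β m := by
      rw [heq]
      exact uCount_min_right hmnα (Ne.symm hmM)
        (fun x hx => hmin x (heq ▸ List.mem_append.2 (Or.inl hx))
          (fun hc => hmnα (hc ▸ hx)))
        (lt_of_le_of_ne (le_of_lt (hmin M (heq ▸ List.mem_append.2 (Or.inr (by simp)))
          (Ne.symm hmM))) (by omega))
    rw [heq] at herase hu
    rw [heq, lodayPsi_split hnd' hα hβ, herase,
      lodayPsi_split (herase ▸ ((heq ▸ hnd : (α ++ M :: β).Nodup).erase m)) hα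
        (fun x hx => hβ x (List.mem_of_mem_erase hx)), hu]
    have hleaves : (lodayPsi α).leaves = α.length + 1 := psi_leaves _ hndα
    have hpos : ¬ (α.length + 1 + uCount β m + 1 ≤ (lodayPsi α).leaves) := by
      rw [hleaves]; omega
    rw [BT.graft, if_neg hpos]
    congr 1
    rw [hleaves, show α.length + 1 + uCount β m + 1 - (α.length + 1) = uCount β m + 1 by omega]
    rcases Nat.lt_or_ge β.length 2 with hsmall | hbig
    · have hβ1 : β = [m] := by
        have h1 : β.length = 1 := by
          have : 1 ≤ β.length := List.length_pos_of_mem hmβ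
          omega
        match β, h1 with
        | [x], _ =>
            rcases List.mem_singleton.1 hmβ with rfl
            rfl
      rw [hβ1]
      have : uCount [m] m = 0 := by
        unfold uCount
        simp [List.takeWhile_cons]
      rw [this, lodayPsi_singleton]
      simp [List.erase_cons, lodayPsi_nil, BT.graft]
    · exact psi_erase_min β m hndβ hmβ
        (fun x hx hxm => hmin x (heq ▸ (List.mem_append.2 (Or.inr (by simp [hx])))) hxm) hbig
termination_by a.length
decreasing_by
  all_goals (simp [heq]; try omega)

/-! ### main theorem -/

theorem main_aux (a : List ℕ) (hnd : a.Nodup) (hne : a ≠ []) :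
    lodayPsi a = (fWord a).eval := by
  rcases Nat.lt_or_ge a.length 2 with hsmall | hbig
  · -- singleton
    have h1 : a.length = 1 := by
      obtain ⟨z, hz⟩ := List.exists_mem_of_ne_nil a hne
      have : 1 ≤ a.length := List.length_pos_of_mem hz
      omega
    obtain ⟨x, rfl⟩ : ∃ x, a = [x] := by
      match a, h1 with
      | [x], _ => exact ⟨x, rfl⟩
    rw [lodayPsi_singleton, fWord_eq [x] (sortDesc_singleton x)]
    rfl
  · -- remove the minimum
    obtain ⟨m, hM⟩ : ∃ m, a.minimum = some m := by
      cases h : a.minimum with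
      | top => exact absurd (List.minimum_eq_top.1 h) hne
      | coe m => exact ⟨m, rfl⟩
    have hmem : m ∈ a := List.minimum_mem hM
    have hle : ∀ x ∈ a, m ≤ x := fun x hx => List.minimum_le_of_mem hx hM
    have hmin : ∀ x ∈ a, x ≠ m → m < x := fun x hx hxm =>
      lt_of_le_of_ne (hle x hx) (Ne.symm hxm)
    have hne' : a.erase m ≠ [] := by
      intro h
      have := List.length_erase_of_mem hmem
      rw [h] at this; simp at this; omega
    rw [psi_erase_min a m hnd hmem hmin hbig,
      fWord_erase_min hnd hmem hmin hbig,
      main_aux (a.erase m) (hnd.erase m) hne']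
    rfl
termination_by a.length
decreasing_by
  simp [List.length_erase_of_mem hmem]
  omega

end LRAux

theorem lodayPsi_via_f (n : ℕ) (hn : 1 ≤ n) (π : List ℕ)
    (hperm : π.Perm (List.range' 1 n)) :
    lodayPsi π = (fWord π).eval := by
  have hnd : π.Nodup := hperm.nodup_iff.2 (List.nodup_range' (s := 1) (n := n))
  have hne : π ≠ [] := by
    intro h
    have hl := hperm.length_eq
    rw [h, List.length_range'] at hl
    simp at hl
    omega
  exact LRAux.main_aux π hnd hne
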